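/- arXiv:2205.03180 — 2 statements merged into one kernel-verified Lean document; each statement's English description precedes it below -/
import Mathlib

section
/- Let M be a p-matroid with rank function r and let M^e_{a,b} be its es-splitting matroid with rank function r'. For every subset X ⊆ E(M), r'(X ∪ {z}) = r(X) + 1. -/
open Matrix Set

variable {α : Type*}

/-- The columns of `A` indexed by `S` are linearly independent. -/
def ColIndep {m E F : Type*} [Semiring F] (A : Matrix m E F) (S : Set E) : Prop :=
  LinearIndependent F (fun s : S => Aᵀ s.1)

/-- `M` is the vector matroid of the matrix `A` (ground set all columns). -/
def IsVectorMatroid {m E F : Type*} [Semiring F] (M : Matroid E) (A : Matrix m E F) : Prop :=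
  M.E = Set.univ ∧ ∀ S : Set E, M.Indep S ↔ ColIndep A S

/-- The splitting matrix `A_{a,b}`: `A` with an extra row having `α` in columns `a`, `b`
and `0` elsewhere. -/
def splitMatrix {m E F : Type*} [Zero F] [DecidableEq E] (A : Matrix m E F) (a b : E) (α : F) :
    Matrix (m ⊕ Unit) E F :=
  Matrix.of fun i j =>
    Sum.elim (fun i' => A i' j) (fun _ => if j = a ∨ j = b then α else 0) i

/-- The column `z = (0,…,0,α)ᵀ`. -/
def zColumn {m F : Type*} [Zero F] (α : F) : m ⊕ Unit → F :=
  Sum.elim (fun _ => 0) (fun _ => α)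

/-- The es-splitting matrix `A^e_{a,b}`: the splitting matrix with two extra columns,
`Sum.inr 0 ↦ z = (0,…,0,α)ᵀ` and `Sum.inr 1 ↦ γ = e - z`. -/
def esMatrix {m E F : Type*} [Ring F] [DecidableEq E] (A : Matrix m E F) (a b e : E) (α : F) :
    Matrix (m ⊕ Unit) (E ⊕ Fin 2) F :=
  Matrix.of fun i j =>
    Sum.elim (fun x => splitMatrix A a b α i x)
      (fun k => if k = (0 : Fin 2) then zColumn α i
                else splitMatrix A a b α i e - zColumn α i) j

/-- A circuit of a matroid: a minimal dependent set. -/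
def IsCircuit (M : Matroid α) (C : Set α) : Prop :=
  M.Dep C ∧ ∀ D, D ⊂ C → M.Indep D

/-- The (ℕ-valued) rank of a set in a matroid: the largest size of an independent subset. -/
noncomputable def rk (M : Matroid α) (X : Set α) : ℕ :=
  sSup {n | ∃ I, I ⊆ X ∧ M.Indep I ∧ I.ncard = n}

/-- Every element lies in some circuit. -/
def Coloopless (M : Matroid α) : Prop :=
  ∀ x ∈ M.E, ∃ C, IsCircuit M C ∧ x ∈ C

/-- A simple matroid: every subset of the ground set with at most two elements is independent. -/
def SimpleMatroid (M : Matroid α) : Prop :=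
  ∀ X ⊆ M.E, X.ncard ≤ 2 → M.Indep X

/-- A matroid is connected if every two distinct elements lie in a common circuit. -/
def ConnectedMatroid (M : Matroid α) : Prop :=
  ∀ x ∈ M.E, ∀ y ∈ M.E, x ≠ y → ∃ C, IsCircuit M C ∧ x ∈ C ∧ y ∈ C

/-- A `k`-separation of `M`: a partition `{S, T}` of the ground set with `|S|, |T| ≥ k` and
`r(S) + r(T) - r(M) < k`. -/
def KSeparation (M : Matroid α) (k : ℕ) (S T : Set α) : Prop :=
  S ∪ T = M.E ∧ Disjoint S T ∧ k ≤ S.ncard ∧ k ≤ T.ncard ∧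
    rk M S + rk M T < rk M M.E + k

/-- `M` is `n`-connected: it has no `k`-separation for `1 ≤ k ≤ n - 1`. -/
def NConnected (M : Matroid α) (n : ℕ) : Prop :=
  ∀ k S T, 1 ≤ k → k ≤ n - 1 → ¬ KSeparation M k S T

/-- A matroid is Eulerian if its ground set is a disjoint union of circuits. -/
def Eulerian (M : Matroid α) : Prop :=
  ∃ (n : ℕ) (D : Fin n → Set α), (∀ i, IsCircuit M (D i)) ∧
    (∀ i j, i ≠ j → Disjoint (D i) (D j)) ∧ (⋃ i, D i) = M.E

/-- `C` carries a linear dependence of the columns of `A` with all coefficients nonzero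
exactly on `C`, whose coefficients at `a` and `b` sum to zero. -/
def HasPDependence {m E F : Type*} [Semiring F] [Fintype E] (A : Matrix m E F)
    (a b : E) (C : Set E) : Prop :=
  ∃ c : E → F, (∀ x, x ∈ C ↔ c x ≠ 0) ∧ (∑ x, c x • Aᵀ x) = 0 ∧ c a + c b = 0

/-- A `p`-circuit of the vector matroid `M = M[A]` with respect to `a, b`. -/
def IsPCircuit {m E F : Type*} [Semiring F] [Fintype E] (M : Matroid E) (A : Matrix m E F)
    (a b : E) (C : Set E) : Prop :=
  IsCircuit M C ∧ a ∈ C ∧ b ∈ C ∧ HasPDependence A a b C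

/-- An `np`-circuit: a circuit meeting `{a, b}` that is not a `p`-circuit. -/
def IsNpCircuit {m E F : Type*} [Semiring F] [Fintype E] (M : Matroid E) (A : Matrix m E F)
    (a b : E) (C : Set E) : Prop :=
  IsCircuit M C ∧ (C ∩ {a, b}).Nonempty ∧ ¬ HasPDependence A a b C

/-- Any independent subset of `X` has at most as many elements as a basis of `X`. -/
lemma ncard_le_ncard_of_basis {α : Type*} [Finite α] {M : Matroid α} {B J X : Set α}
    (hB : M.IsBasis B X) (hJ : M.Indep J) (hJX : J ⊆ X) : J.ncard ≤ B.ncard := by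
  obtain ⟨J', hJ', hJJ'⟩ := hJ.subset_isBasis_of_subset hJX hB.subset_ground
  have h2 : J'.ncard = B.ncard := by
    rw [Set.ncard_def, Set.ncard_def, hJ'.encard_eq_encard hB]
  exact (Set.ncard_le_ncard hJJ' J'.toFinite).trans h2.le

/-- The `rk` of a set equals the cardinality of any basis of it. -/
lemma rk_eq_ncard_of_basis {α : Type*} [Finite α] {M : Matroid α} {B X : Set α}
    (hB : M.IsBasis B X) : rk M X = B.ncard := by
  have hmem : B.ncard ∈ {n | ∃ I, I ⊆ X ∧ M.Indep I ∧ I.ncard = n} :=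
    ⟨B, hB.subset, hB.indep, rfl⟩
  have hub : ∀ n ∈ {n | ∃ I, I ⊆ X ∧ M.Indep I ∧ I.ncard = n}, n ≤ B.ncard := by
    rintro n ⟨I, hIX, hI, rfl⟩
    exact ncard_le_ncard_of_basis hB hI hIX
  exact le_antisymm (csSup_le ⟨_, hmem⟩ hub) (le_csSup ⟨_, hub⟩ hmem)

variable {m E : Type*} [Fintype m] [Fintype E] [DecidableEq E] {p : ℕ} [Fact p.Prime]

/-- The key linear-algebra fact: adjoining the column `z` to a set of original columns
preserves and reflects linear independence. -/
lemma colIndep_union_z_iff (A : Matrix m E (ZMod p)) (a b e : E) (α : ZMod p) (hα : α ≠ 0)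
    (I : Set E) :
    ColIndep (esMatrix A a b e α) (Sum.inl '' I ∪ {Sum.inr 0}) ↔ ColIndep A I := by
  classical
  set S : Set (E ⊕ Fin 2) := Sum.inl '' I ∪ {Sum.inr 0} with hS
  -- the reindexed family
  set W : ↥I ⊕ Unit → (m ⊕ Unit → ZMod p) :=
    Sum.elim (fun x : ↥I => (esMatrix A a b e α)ᵀ (Sum.inl x.1))
      (fun _ => (esMatrix A a b e α)ᵀ (Sum.inr 0)) with hW
  have e1 : ∀ (x : E) (i' : m), (esMatrix A a b e α)ᵀ (Sum.inl x) (Sum.inl i') = A i' x :=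
    fun _ _ => rfl
  have e2 : ∀ (x : E) (u : Unit),
      (esMatrix A a b e α)ᵀ (Sum.inl x) (Sum.inr u) = (if x = a ∨ x = b then α else 0) :=
    fun _ _ => rfl
  have e3 : ∀ i' : m, (esMatrix A a b e α)ᵀ (Sum.inr 0) (Sum.inl i') = 0 := by
    intro i'; simp [esMatrix, zColumn, Matrix.transpose_apply]
  have e4 : ∀ u : Unit, (esMatrix A a b e α)ᵀ (Sum.inr 0) (Sum.inr u) = α := by
    intro u; simp [esMatrix, zColumn, Matrix.transpose_apply]
  have g : ↥I ⊕ Unit → ↥S :=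
    Sum.elim (fun x => ⟨Sum.inl x.1, Or.inl ⟨x.1, x.2, rfl⟩⟩)
      (fun _ => ⟨Sum.inr 0, Or.inr rfl⟩)
  have hbij : Function.Bijective (Sum.elim
      (fun x : ↥I => (⟨Sum.inl x.1, Or.inl ⟨x.1, x.2, rfl⟩⟩ : ↥S))
      (fun _ : Unit => (⟨Sum.inr 0, Or.inr rfl⟩ : ↥S))) := by
    constructor
    · rintro (x | u) (y | v) h <;> simp [Subtype.ext_iff] at h ⊢
      exact h
    · rintro ⟨s, hs⟩
      rcases hs with ⟨x, hx, rfl⟩ | hs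
      · exact ⟨Sum.inl ⟨x, hx⟩, rfl⟩
      · refine ⟨Sum.inr (), ?_⟩
        simp only [Set.mem_singleton_iff] at hs
        simp [hs]
  have heq : ColIndep (esMatrix A a b e α) S ↔ LinearIndependent (ZMod p) W := by
    refine (linearIndependent_equiv' (Equiv.ofBijective _ hbij) ?_).symm
    funext s
    rcases s with x | u <;> rfl
  rw [heq]
  constructor
  · intro h
    rw [Fintype.linearIndependent_iff] at h
    show LinearIndependent (ZMod p) (fun s : ↥I => Aᵀ s.1)
    rw [Fintype.linearIndependent_iff]
    intro c hc
    set t : ZMod p := ∑ x : ↥I, c x * (if (x : E) = a ∨ (x : E) = b then α else 0) with ht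
    set G : ↥I ⊕ Unit → ZMod p := Sum.elim c (fun _ => -(α⁻¹ * t)) with hG
    have hGsum : ∑ s, G s • W s = 0 := by
      funext i
      rw [Finset.sum_apply, Fintype.sum_sum_type]
      rcases i with i' | u
      · have hc' := congrFun hc i'
        simp only [Finset.sum_apply, Pi.smul_apply, Matrix.transpose_apply, Pi.zero_apply,
          smul_eq_mul] at hc'
        simp only [hG, hW, Sum.elim_inl, Sum.elim_inr, Pi.smul_apply, smul_eq_mul,
          e1, e3, mul_zero, Finset.sum_const_zero, add_zero, Pi.zero_apply]
        simpa using hc'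
      · simp only [hG, hW, Sum.elim_inl, Sum.elim_inr, Pi.smul_apply, smul_eq_mul,
          e2, e4, Pi.zero_apply, Finset.sum_const, Finset.card_univ, Fintype.card_unit,
          one_smul]
        rw [← ht, neg_mul, mul_comm α⁻¹ t, mul_assoc, inv_mul_cancel₀ hα, mul_one,
          add_neg_cancel]
    intro x
    have := h G hGsum (Sum.inl x)
    simpa [hG] using this
  · intro h
    have h' : ∀ c : ↥I → ZMod p, ∑ x : ↥I, c x • Aᵀ (x : E) = 0 → ∀ x, c x = 0 := by
      rw [show ColIndep A I = LinearIndependent (ZMod p) (fun s : ↥I => Aᵀ s.1) from rfl,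
        Fintype.linearIndependent_iff] at h
      exact h
    rw [Fintype.linearIndependent_iff]
    intro G hGsum
    have h1 : ∀ x : ↥I, G (Sum.inl x) = 0 := by
      apply h' (fun x => G (Sum.inl x))
      funext i'
      have hc' := congrFun hGsum (Sum.inl i')
      rw [Finset.sum_apply, Fintype.sum_sum_type] at hc'
      simp only [hW, Sum.elim_inl, Sum.elim_inr, Pi.smul_apply, smul_eq_mul,
        e1, e3, mul_zero, Finset.sum_const_zero, add_zero, Pi.zero_apply] at hc'
      simpa [Finset.sum_apply, Matrix.transpose_apply] using hc'
    rintro (x | u)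
    · exact h1 x
    · have hc' := congrFun hGsum (Sum.inr ())
      rw [Finset.sum_apply, Fintype.sum_sum_type] at hc'
      simp only [hW, Sum.elim_inl, Sum.elim_inr, Pi.smul_apply, smul_eq_mul,
        e2, e4, Pi.zero_apply, Finset.sum_const, Finset.card_univ, Fintype.card_unit,
        one_smul] at hc'
      rw [Finset.sum_congr rfl (fun x _ => by rw [h1 x, zero_mul])] at hc'
      simp only [Finset.sum_const_zero, zero_add] at hc'
      have hc'' : G (Sum.inr ()) * α = 0 := by simpa using hc'
      have hu : u = () := rfl
      rw [hu]
      exact (mul_eq_zero.mp hc'').resolve_right hα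

theorem esSplitting_rank_union_z (A : Matrix m E (ZMod p)) (a b e : E)
    (he : e = a ∨ e = b) (α : ZMod p) (hα : α ≠ 0)
    (M : Matroid E) (hM : IsVectorMatroid M A)
    (M' : Matroid (E ⊕ Fin 2)) (hM' : IsVectorMatroid M' (esMatrix A a b e α)) :
    ∀ X : Set E, rk M' (Sum.inl '' X ∪ {Sum.inr 0}) = rk M X + 1 := by
  classical
  intro X
  set S : Set (E ⊕ Fin 2) := Sum.inl '' X ∪ {Sum.inr 0} with hS
  have hSE : S ⊆ M'.E := by rw [hM'.1]; exact Set.subset_univ _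
  -- the singleton `{z}` is independent in `M'`
  have hz : M'.Indep {Sum.inr 0} := by
    rw [hM'.2]
    have h0 : ColIndep A (∅ : Set E) := linearIndependent_empty_type
    have := (colIndep_union_z_iff A a b e α hα ∅).mpr h0
    simpa using this
  -- a basis of `S` containing `z`
  obtain ⟨B, hB, hzB⟩ := hz.subset_isBasis_of_subset
    (by intro s hs; exact Or.inr hs) hSE
  set I : Set E := Sum.inl ⁻¹' B with hI
  have hBeq : B = Sum.inl '' I ∪ {Sum.inr 0} := by
    ext s
    constructor
    · intro hs
      rcases hB.subset hs with ⟨x, hx, rfl⟩ | h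
      · exact Or.inl ⟨x, hs, rfl⟩
      · exact Or.inr h
    · rintro (⟨x, hx, rfl⟩ | h)
      · exact hx
      · exact hzB h
  have hIX : I ⊆ X := by
    intro x hx
    rcases hB.subset hx with ⟨y, hy, hxy⟩ | h
    · rwa [← Sum.inl_injective hxy]
    · simp at h
  have hIindep : M.Indep I := by
    rw [hM.2]
    refine (colIndep_union_z_iff A a b e α hα I).mp ?_
    rw [← hBeq]
    exact (hM'.2 B).mp hB.indep
  -- cardinality computation
  have hcard : ∀ J : Set E, (Sum.inl '' J ∪ {Sum.inr 0} : Set (E ⊕ Fin 2)).ncard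
      = J.ncard + 1 := by
    intro J
    rw [Set.ncard_union_eq (by simp) (Set.toFinite _) (Set.toFinite _),
      Set.ncard_image_of_injective _ Sum.inl_injective, Set.ncard_singleton]
  have hBcard : B.ncard = I.ncard + 1 := by rw [hBeq]; exact hcard I
  -- `rk M X = I.ncard`
  have hrkX : rk M X = I.ncard := by
    have hmem : I.ncard ∈ {n | ∃ J, J ⊆ X ∧ M.Indep J ∧ J.ncard = n} :=
      ⟨I, hIX, hIindep, rfl⟩
    have hub : ∀ n ∈ {n | ∃ J, J ⊆ X ∧ M.Indep J ∧ J.ncard = n}, n ≤ I.ncard := by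
      rintro n ⟨J, hJX, hJ, rfl⟩
      have hJ' : M'.Indep (Sum.inl '' J ∪ {Sum.inr 0}) := by
        rw [hM'.2]
        exact (colIndep_union_z_iff A a b e α hα J).mpr ((hM.2 J).mp hJ)
      have hsub : (Sum.inl '' J ∪ {Sum.inr 0} : Set (E ⊕ Fin 2)) ⊆ S :=
        Set.union_subset_union (Set.image_mono hJX) (subset_refl _)
      have := ncard_le_ncard_of_basis hB hJ' hsub
      rw [hcard J, hBcard] at this
      omega
    exact le_antisymm (csSup_le ⟨_, hmem⟩ hub) (le_csSup ⟨_, hub⟩ hmem)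
  rw [rk_eq_ncard_of_basis hB, hBcard, hrkX]
end

section
/- Let M be a p-matroid (p > 2) and suppose the es-splitting matroid M^e_{a,b} (with e = b) is Eulerian. Then there exists a collection of circuits {C_np, C_1, ..., C_k} of M with C_np an np-circuit containing both a and b, E(M) = C_np ∪ C_1 ∪ ... ∪ C_k, and all circuits in the collection pairwise disjoint except C_np ∩ C_1 = {b}. -/
open Matrix Set

variable {α : Type*}

variable {m E : Type*} [Fintype m] [Fintype E] [DecidableEq E] {p : ℕ} [Fact p.Prime]

set_option linter.unusedSectionVars false
set_option maxHeartbeats 1000000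

section AuxLemmas
variable {F : Type*} [Field F]

lemma sum_ext' {W : Type*} [AddCommMonoid W] (S : Set E) [Fintype ↥S] (f : E → W)
    (hf : ∀ x, x ∉ S → f x = 0) : ∑ x, f x = ∑ s : S, f s.1 := by
  classical
  rw [← Finset.sum_subtype S.toFinset (fun y => Set.mem_toFinset) f]
  exact (Finset.sum_subset (Finset.subset_univ _)
    (fun y _ hy => hf y (fun hS => hy (Set.mem_toFinset.2 hS)))).symm

lemma colIndep_iff_forall {m' E' : Type*} [Fintype E'] (A : Matrix m' E' F) (S : Set E') :
    ColIndep A S ↔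
      ∀ c : E' → F, (∀ x, c x ≠ 0 → x ∈ S) → (∑ x, c x • Aᵀ x) = 0 → ∀ x, c x = 0 := by
  classical
  unfold ColIndep
  rw [Fintype.linearIndependent_iff]
  constructor
  · intro h c hsupp hsum x
    by_contra hx
    have hxS : x ∈ S := hsupp x hx
    have hsum' : ∑ s : S, c s.1 • Aᵀ s.1 = 0 := by
      rw [← sum_ext' S (fun x => c x • Aᵀ x) (fun y hy => by
        have : c y = 0 := by by_contra h'; exact hy (hsupp y h')
        simp [this])]
      exact hsum
    exact hx (h (fun s => c s.1) hsum' ⟨x, hxS⟩)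
  · intro h g hg s
    have hc := h (fun x => if hx : x ∈ S then g ⟨x, hx⟩ else 0) ?_ ?_ s.1
    · simpa [s.2] using hc
    · intro x hx
      by_contra h'
      simp [h'] at hx
    · rw [sum_ext' S _ (fun y hy => by simp [hy])]
      rw [← hg]
      exact Finset.sum_congr rfl (fun s _ => by simp [s.2])

lemma dep_of_dependence {m' E' : Type*} [Fintype E'] {A : Matrix m' E' F} {M : Matroid E'}
    (hM : IsVectorMatroid M A)
    {c : E' → F} {S : Set E'} (hsupp : ∀ x, c x ≠ 0 → x ∈ S) (hne : ∃ x, c x ≠ 0)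
    (hsum : (∑ x, c x • Aᵀ x) = 0) : M.Dep S := by
  rw [Matroid.dep_iff]
  refine ⟨?_, hM.1 ▸ Set.subset_univ S⟩
  rw [hM.2, colIndep_iff_forall]
  intro h
  obtain ⟨x, hx⟩ := hne
  exact hx (h c hsupp hsum x)

lemma exists_circuit_subset {β : Type*} [Finite β] {M : Matroid β} {S : Set β} (h : M.Dep S) :
    ∃ C ⊆ S, IsCircuit M C := by
  obtain ⟨n, hn⟩ : ∃ n, S.ncard ≤ n := ⟨S.ncard, le_refl _⟩
  induction n generalizing S with
  | zero =>
    have hS : S = ∅ := Set.ncard_eq_zero (Set.toFinite S) |>.1 (Nat.le_zero.1 hn)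
    rw [hS] at h
    exact absurd M.empty_indep h.not_indep
  | succ n ih =>
    by_cases hmin : ∀ D, D ⊂ S → M.Indep D
    · exact ⟨S, Set.Subset.rfl, h, hmin⟩
    · push_neg at hmin
      obtain ⟨D, hDS, hD⟩ := hmin
      have hdep : M.Dep D := Matroid.dep_iff.2 ⟨hD, hDS.subset.trans h.subset_ground⟩
      have hcard : D.ncard ≤ n := by
        have := Set.ncard_lt_ncard hDS (Set.toFinite S)
        omega
      obtain ⟨C, hCD, hC⟩ := ih hdep hcard
      exact ⟨C, hCD.trans hDS.subset, hC⟩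

lemma circuit_nonempty {β : Type*} {M : Matroid β} {C : Set β} (h : IsCircuit M C) :
    C.Nonempty := by
  rcases Set.eq_empty_or_nonempty C with hC | hC
  · rw [hC] at h
    exact absurd M.empty_indep h.1.not_indep
  · exact hC

lemma circuit_dependence {m' E' : Type*} [Fintype E'] {A : Matrix m' E' F} {M : Matroid E'}
    (hM : IsVectorMatroid M A) {C : Set E'} (h : IsCircuit M C) :
    ∃ c : E' → F, (∀ x, x ∈ C ↔ c x ≠ 0) ∧ (∑ x, c x • Aᵀ x) = 0 := by
  have hni : ¬ ColIndep A C := by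
    rw [← hM.2]; exact h.1.not_indep
  rw [colIndep_iff_forall] at hni
  push_neg at hni
  obtain ⟨c, hsupp, hsum, x0, hx0⟩ := hni
  refine ⟨c, ?_, hsum⟩
  have hSC : {x | c x ≠ 0} = C := by
    by_contra hne
    have hss : {x | c x ≠ 0} ⊂ C := ⟨fun x hx => hsupp x hx, fun hsub => hne
      (Set.Subset.antisymm (fun x hx => hsupp x hx) hsub)⟩
    have hdep : M.Dep {x | c x ≠ 0} :=
      dep_of_dependence hM (fun x hx => hx) ⟨x0, hx0⟩ hsum
    exact hdep.not_indep (h.2 _ hss)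
  intro x
  constructor
  · intro hx; rw [← hSC] at hx; exact hx
  · intro hx; rw [← hSC]; exact hx

lemma adep_iff {m' : Type*} [Fintype m'] (A : Matrix m' E F) (c : E → F) :
    (∑ x, c x • Aᵀ x) = 0 ↔ ∀ i, ∑ x, c x * A i x = 0 := by
  constructor
  · intro h i
    have := congrFun h i
    simpa [Finset.sum_apply] using this
  · intro h
    funext i
    simpa [Finset.sum_apply] using h i

lemma sum_pair_ite {a b : E} (hab : a ≠ b) (c : E → F) (α : F) :
    (∑ x, c x * (if x = a ∨ x = b then α else 0)) = c a * α + c b * α := by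
  have key : ∀ x : E, c x * (if x = a ∨ x = b then α else 0) =
      (if x = a then c x * α else 0) + (if x = b then c x * α else 0) := by
    intro x
    by_cases hxa : x = a <;> by_cases hxb : x = b <;> simp_all
  rw [Finset.sum_congr rfl (fun x _ => key x), Finset.sum_add_distrib,
    Finset.sum_ite_eq' Finset.univ a (fun x => c x * α),
    Finset.sum_ite_eq' Finset.univ b (fun x => c x * α)]
  simp

lemma esdep_iff {m' : Type*} [Fintype m'] {A : Matrix m' E F} {a b : E} {α : F}
    (hab : a ≠ b) (hα : α ≠ 0) (c : E ⊕ Fin 2 → F) :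
    (∑ j, c j • (esMatrix A a b b α)ᵀ j) = 0 ↔
      ((∀ i, (∑ x, c (Sum.inl x) * A i x) + c (Sum.inr 1) * A i b = 0) ∧
        c (Sum.inl a) + c (Sum.inl b) + c (Sum.inr 0) = 0) := by
  have key : ∀ i0 : m' ⊕ Unit, (∑ j, c j • (esMatrix A a b b α)ᵀ j) i0 =
      Sum.elim
        (fun i => (∑ x, c (Sum.inl x) * A i x) + c (Sum.inr 1) * A i b)
        (fun _ => (c (Sum.inl a) + c (Sum.inl b) + c (Sum.inr 0)) * α) i0 := by
    intro i0
    rw [Finset.sum_apply, Fintype.sum_sum_type]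
    cases i0 with
    | inl i =>
      simp only [Pi.smul_apply, Matrix.transpose_apply, smul_eq_mul, Sum.elim_inl]
      rw [Fin.sum_univ_two]
      simp [esMatrix, splitMatrix, zColumn]
    | inr u =>
      simp only [Pi.smul_apply, Matrix.transpose_apply, smul_eq_mul, Sum.elim_inr]
      rw [Fin.sum_univ_two]
      simp only [esMatrix, splitMatrix, zColumn, Matrix.of_apply, Sum.elim_inl, Sum.elim_inr]
      rw [sum_pair_ite hab]
      simp
      ring
  rw [funext_iff]
  constructor
  · intro h
    constructor
    · intro i
      have := h (Sum.inl i)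
      rw [key (Sum.inl i)] at this
      simpa using this
    · have := h (Sum.inr ())
      rw [key (Sum.inr ())] at this
      simp only [Sum.elim_inr, Pi.zero_apply] at this
      rcases mul_eq_zero.1 this with h' | h'
      · exact h'
      · exact absurd h' hα
  · rintro ⟨h1, h2⟩ j
    rw [key j]
    cases j with
    | inl i => simpa using h1 i
    | inr u => simp [h2]

end AuxLemmas

theorem decomposition_of_esSplitting_eulerian (hp2 : 2 < p)
    (A : Matrix m E (ZMod p)) (a b : E) (hab : a ≠ b) (α : ZMod p) (hα : α ≠ 0)
    (M : Matroid E) (hM : IsVectorMatroid M A)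
    (M' : Matroid (E ⊕ Fin 2)) (hM' : IsVectorMatroid M' (esMatrix A a b b α))
    (hEul : Eulerian M') :
    ∃ (k : ℕ) (Cnp : Set E) (Cs : Fin (k + 1) → Set E),
      IsNpCircuit M A a b Cnp ∧ a ∈ Cnp ∧ b ∈ Cnp ∧
      (∀ i, IsCircuit M (Cs i)) ∧
      (Set.univ : Set E) = Cnp ∪ (⋃ i, Cs i) ∧
      (∀ i j, i ≠ j → Disjoint (Cs i) (Cs j)) ∧
      (∀ i, i ≠ 0 → Disjoint Cnp (Cs i)) ∧
      Cnp ∩ Cs 0 = {b} := by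
  classical
  obtain ⟨n, D, hDc, hDdisj, hDcover⟩ := hEul
  have hmem : ∀ j : E ⊕ Fin 2, ∃ i, j ∈ D i := by
    intro j
    have h1 : j ∈ ⋃ i, D i := by rw [hDcover, hM'.1]; exact Set.mem_univ j
    exact Set.mem_iUnion.1 h1
  have huniq : ∀ (j) (i1 i2 : Fin n), j ∈ D i1 → j ∈ D i2 → i1 = i2 := by
    intro j i1 i2 h1 h2
    by_contra hne
    exact Set.disjoint_left.1 (hDdisj i1 i2 hne) h1 h2
  choose c hcsupp hcsum using fun i => circuit_dependence hM' (hDc i)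
  have hes := fun i => (esdep_iff hab hα (c i)).1 (hcsum i)
  have htop := fun i => (hes i).1
  have hbot := fun i => (hes i).2
  have hzero : ∀ (i) (j), j ∉ D i → c i j = 0 := by
    intro i j h
    by_contra h'
    exact h ((hcsupp i j).2 h')
  obtain ⟨iz, hiz⟩ := hmem (Sum.inr 0)
  obtain ⟨iγ, hiγ⟩ := hmem (Sum.inr 1)
  have hcz_ne : c iz (Sum.inr 0) ≠ 0 := (hcsupp iz _).1 hiz
  have hcγ_ne : c iγ (Sum.inr 1) ≠ 0 := (hcsupp iγ _).1 hiγ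
  have hss_of : ∀ {T U : Set (E ⊕ Fin 2)}, T ⊆ U → (∃ x, x ∈ U ∧ x ∉ T) → T ⊂ U := by
    rintro T U hsub ⟨x, hxU, hxT⟩
    refine hsub.ssubset_of_ne ?_
    intro h
    subst h
    exact hxT hxU
  have hcontr : ∀ (i0 : Fin n) (T' : Set (E ⊕ Fin 2)) (d' : E ⊕ Fin 2 → ZMod p),
      (∀ j, d' j ≠ 0 → j ∈ T') → (∃ j, d' j ≠ 0) →
      (∑ j, d' j • (esMatrix A a b b α)ᵀ j) = 0 → T' ⊂ D i0 → False := by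
    intro i0 T' d' hsupp hne hsum hss
    exact (dep_of_dependence hM' hsupp hne hsum).not_indep ((hDc i0).2 T' hss)
  -- b is in the circuit of z
  have hb : Sum.inl b ∈ D iz := by
    by_contra hbz
    obtain ⟨jb, hjb⟩ := hmem (Sum.inl b)
    have hjb_ne : jb ≠ iz := fun h => hbz (h ▸ hjb)
    have h0 : c jb (Sum.inr 0) = 0 := hzero _ _ (fun h => hjb_ne (huniq _ _ _ h hiz))
    have hbjb : c jb (Sum.inl b) ≠ 0 := (hcsupp jb _).1 hjb
    have hajb : Sum.inl a ∈ D jb := by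
      apply (hcsupp jb _).2
      intro ha0
      have hthis := hbot jb
      rw [h0, ha0] at hthis
      simp at hthis
      exact hbjb hthis
    have haz : Sum.inl a ∈ D iz := by
      apply (hcsupp iz _).2
      intro ha0
      have hthis := hbot iz
      rw [ha0, hzero _ _ hbz] at hthis
      simp at hthis
      exact hcz_ne hthis
    exact hjb_ne (huniq _ _ _ hajb haz)
  -- a is in the circuit of z
  have ha : Sum.inl a ∈ D iz := by
    by_contra haz
    obtain ⟨ja, hja⟩ := hmem (Sum.inl a)
    have hja_ne : ja ≠ iz := fun h => haz (h ▸ hja)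
    have h0 : c ja (Sum.inr 0) = 0 := hzero _ _ (fun h => hja_ne (huniq _ _ _ h hiz))
    have haja : c ja (Sum.inl a) ≠ 0 := (hcsupp ja _).1 hja
    have hbja : Sum.inl b ∈ D ja := by
      apply (hcsupp ja _).2
      intro hb0
      have hthis := hbot ja
      rw [h0, hb0] at hthis
      simp at hthis
      exact haja hthis
    exact hja_ne (huniq _ _ _ hbja hb)
  -- z and γ lie in different circuits
  have hne_zγ : iz ≠ iγ := by
    intro heq
    have hiγz : Sum.inr 1 ∈ D iz := heq ▸ hiγ
    refine hcontr iz ({Sum.inl b, Sum.inr 0, Sum.inr 1} : Set (E ⊕ Fin 2))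
      (Sum.elim (fun x => if x = b then (1 : ZMod p) else 0) ![-1, -1]) ?_ ?_ ?_ ?_
    · rintro (x | k) hx
      · have hxb : x = b := by
          by_contra h'
          simp [h'] at hx
        simp [hxb]
      · fin_cases k <;> simp
    · exact ⟨Sum.inl b, by simp⟩
    · rw [esdep_iff hab hα]
      constructor
      · intro i
        simp only [Sum.elim_inl, Sum.elim_inr, ite_mul, one_mul, zero_mul]
        rw [Finset.sum_ite_eq' Finset.univ b (fun x => A i x)]
        simp
      · simp [hab]
    · refine hss_of ?_ ⟨Sum.inl a, ha, ?_⟩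
      · intro j hj
        simp only [Set.mem_insert_iff, Set.mem_singleton_iff] at hj
        rcases hj with rfl | rfl | rfl
        · exact hb
        · exact hiz
        · exact hiγz
      · simp [hab]
  have hbγ : Sum.inl b ∉ D iγ := fun h => hne_zγ (huniq _ _ _ hb h)
  have haγ : Sum.inl a ∉ D iγ := fun h => hne_zγ (huniq _ _ _ ha h)
  have hzγ : Sum.inr 0 ∉ D iγ := fun h => hne_zγ (huniq _ _ _ hiz h)
  have hγz : Sum.inr 1 ∉ D iz := fun h => hne_zγ (huniq _ _ _ h hiγ)
  -- Cnp := Sum.inl ⁻¹' D iz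
  have haC : a ∈ Sum.inl ⁻¹' D iz := ha
  have hbC : b ∈ Sum.inl ⁻¹' D iz := hb
  have hsupp_z : ∀ x, x ∈ Sum.inl ⁻¹' D iz ↔ c iz (Sum.inl x) ≠ 0 :=
    fun x => hcsupp iz (Sum.inl x)
  have hadep_z : (∑ x, (fun x => c iz (Sum.inl x)) x • Aᵀ x) = 0 := by
    rw [adep_iff]
    intro i
    have hthis := htop iz i
    rw [hzero _ _ hγz] at hthis
    simpa using hthis
  have hdep_Cnp : M.Dep (Sum.inl ⁻¹' D iz) :=
    dep_of_dependence hM (fun x hx => (hsupp_z x).2 hx) ⟨a, (hsupp_z a).1 ha⟩ hadep_z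
  have hCnp_min : ∀ S, S ⊂ Sum.inl ⁻¹' D iz → M.Indep S := by
    intro S hS
    by_contra hSnind
    obtain ⟨C', hC'S, hC'⟩ := exists_circuit_subset
      (Matroid.dep_iff.2 ⟨hSnind, hM.1 ▸ Set.subset_univ S⟩)
    obtain ⟨d, hdsupp, hdsum⟩ := circuit_dependence hM hC'
    obtain ⟨y, hyC, hyS⟩ := Set.exists_of_ssubset hS
    have hyC' : y ∉ C' := fun h => hyS (hC'S h)
    have htopd := (adep_iff A d).1 hdsum
    obtain ⟨x1, hx1⟩ := circuit_nonempty hC'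
    refine hcontr iz (Sum.inl '' C' ∪ {Sum.inr 0})
      (Sum.elim d ![-(d a + d b), 0]) ?_ ?_ ?_ ?_
    · rintro (x | k) hx
      · exact Or.inl ⟨x, (hdsupp x).2 hx, rfl⟩
      · fin_cases k
        · exact Or.inr rfl
        · simp at hx
    · exact ⟨Sum.inl x1, by simpa using (hdsupp x1).1 hx1⟩
    · rw [esdep_iff hab hα]
      constructor
      · intro i
        simpa using htopd i
      · simp
    · refine hss_of ?_ ⟨Sum.inl y, hyC, ?_⟩
      · rintro j (⟨x, hx, rfl⟩ | rfl)
        · exact hC'S.trans hS.subset hx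
        · exact hiz
      · rintro (⟨x, hx, hxy⟩ | h)
        · exact hyC' ((Sum.inl.inj hxy) ▸ hx)
        · simp at h
  have hCnp_np : ¬ HasPDependence A a b (Sum.inl ⁻¹' D iz) := by
    rintro ⟨c0, hc0supp, hc0sum, hc0ab⟩
    refine hcontr iz (Sum.inl '' (Sum.inl ⁻¹' D iz)) (Sum.elim c0 ![0, 0]) ?_ ?_ ?_ ?_
    · rintro (x | k) hx
      · exact ⟨x, (hc0supp x).2 hx, rfl⟩
      · fin_cases k <;> simp at hx
    · exact ⟨Sum.inl a, by simpa using (hc0supp a).1 haC⟩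
    · rw [esdep_iff hab hα]
      refine ⟨fun i => by simpa using (adep_iff A c0).1 hc0sum i, by simpa using hc0ab⟩
    · refine hss_of ?_ ⟨Sum.inr 0, hiz, ?_⟩
      · rintro j ⟨x, hx, rfl⟩
        exact hx
      · rintro ⟨x, hx, hxy⟩
        simp at hxy
  have hCnp_circ : IsCircuit M (Sum.inl ⁻¹' D iz) := ⟨hdep_Cnp, hCnp_min⟩
  -- C0 := (Sum.inl ⁻¹' D iγ) ∪ {b}
  have hbC0 : b ∈ (Sum.inl ⁻¹' D iγ) ∪ {b} := Or.inr rfl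
  have haC0 : a ∉ (Sum.inl ⁻¹' D iγ) ∪ {b} := by
    rintro (h | h)
    · exact haγ h
    · exact hab h
  have hγb0 : c iγ (Sum.inl b) = 0 := hzero _ _ hbγ
  have hsupp_γ : ∀ x, x ∈ (Sum.inl ⁻¹' D iγ) ∪ {b} ↔
      (fun x => c iγ (Sum.inl x) + (if x = b then c iγ (Sum.inr 1) else 0)) x ≠ 0 := by
    intro x
    by_cases hxb : x = b
    · subst hxb
      simp only [if_pos rfl, hγb0, zero_add]
      exact iff_of_true hbC0 hcγ_ne
    · simp only [if_neg hxb, add_zero]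
      constructor
      · rintro (h | h)
        · exact (hcsupp iγ _).1 h
        · exact absurd h hxb
      · intro h
        exact Or.inl ((hcsupp iγ _).2 h)
  have hadep_γ : (∑ x, (fun x => c iγ (Sum.inl x) + (if x = b then c iγ (Sum.inr 1) else 0)) x • Aᵀ x) = 0 := by
    rw [adep_iff]
    intro i
    have h1 : ∑ x, (c iγ (Sum.inl x) + (if x = b then c iγ (Sum.inr 1) else 0)) * A i x =
        (∑ x, c iγ (Sum.inl x) * A i x) + c iγ (Sum.inr 1) * A i b := by
      simp only [add_mul, ite_mul, zero_mul]
      rw [Finset.sum_add_distrib, Finset.sum_ite_eq' Finset.univ b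
        (fun x => c iγ (Sum.inr 1) * A i x)]
      simp
    rw [h1, htop iγ i]
  have hdep_C0 : M.Dep ((Sum.inl ⁻¹' D iγ) ∪ {b}) :=
    dep_of_dependence hM (fun x hx => (hsupp_γ x).2 hx) ⟨b, (hsupp_γ b).1 hbC0⟩ hadep_γ
  have hC0_min : ∀ S, S ⊂ (Sum.inl ⁻¹' D iγ) ∪ {b} → M.Indep S := by
    intro S hS
    by_contra hSnind
    obtain ⟨C', hC'S, hC'⟩ := exists_circuit_subset
      (Matroid.dep_iff.2 ⟨hSnind, hM.1 ▸ Set.subset_univ S⟩)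
    obtain ⟨d, hdsupp, hdsum⟩ := circuit_dependence hM hC'
    obtain ⟨y, hyC, hyS⟩ := Set.exists_of_ssubset hS
    have hyC' : y ∉ C' := fun h => hyS (hC'S h)
    have htopd := (adep_iff A d).1 hdsum
    have haC' : a ∉ C' := fun h => haC0 (hC'S.trans hS.subset h)
    have hda : d a = 0 := by
      by_contra h'
      exact haC' ((hdsupp a).2 h')
    by_cases hbC' : b ∈ C'
    · have hdb : d b ≠ 0 := (hdsupp b).1 hbC'
      refine hcontr iγ (Sum.inl '' (C' \ {b}) ∪ {Sum.inr 1})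
        (Sum.elim (fun x => d x - if x = b then d b else 0) ![0, d b]) ?_ ?_ ?_ ?_
      · rintro (x | k) hx
        · simp only [Sum.elim_inl] at hx
          have hxb : x ≠ b := by
            rintro rfl
            simp at hx
          rw [if_neg hxb, sub_zero] at hx
          exact Or.inl ⟨x, ⟨(hdsupp x).2 hx, hxb⟩, rfl⟩
        · fin_cases k
          · simp at hx
          · exact Or.inr rfl
      · exact ⟨Sum.inr 1, by simpa using hdb⟩
      · rw [esdep_iff hab hα]
        constructor
        · intro i
          simp only [Sum.elim_inl, Sum.elim_inr]
          have h1 : ∑ x, (d x - if x = b then d b else 0) * A i x =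
              (∑ x, d x * A i x) - d b * A i b := by
            simp only [sub_mul, ite_mul, zero_mul]
            rw [Finset.sum_sub_distrib, Finset.sum_ite_eq' Finset.univ b (fun x => d b * A i x)]
            simp
          rw [h1, htopd i]
          simp
        · simp [Sum.elim_inl, hda, if_neg hab]
      · refine hss_of ?_ ⟨Sum.inl y, ?_, ?_⟩
        · rintro j (⟨x, ⟨hx, hxb⟩, rfl⟩ | rfl)
          · have hxC0 : x ∈ (Sum.inl ⁻¹' D iγ) ∪ {b} := hC'S.trans hS.subset hx
            rcases hxC0 with h | h
            · exact h
            · exact absurd h hxb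
          · exact hiγ
        · have hyb : y ≠ b := by
            rintro rfl
            exact hyS (hC'S hbC')
          rcases hyC with h | h
          · exact h
          · exact absurd h hyb
        · rintro (⟨x, ⟨hx, _⟩, hxy⟩ | h)
          · exact hyC' ((Sum.inl.inj hxy) ▸ hx)
          · simp at h
    · have hdb : d b = 0 := by
        by_contra h'
        exact hbC' ((hdsupp b).2 h')
      obtain ⟨x1, hx1⟩ := circuit_nonempty hC'
      refine hcontr iγ (Sum.inl '' C') (Sum.elim d ![0, 0]) ?_ ?_ ?_ ?_
      · rintro (x | k) hx
        · exact ⟨x, (hdsupp x).2 (by simpa using hx), rfl⟩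
        · fin_cases k <;> simp at hx
      · exact ⟨Sum.inl x1, by simpa using (hdsupp x1).1 hx1⟩
      · rw [esdep_iff hab hα]
        exact ⟨fun i => by simpa using htopd i, by simp [hda, hdb]⟩
      · refine hss_of ?_ ⟨Sum.inr 1, hiγ, ?_⟩
        · rintro j ⟨x, hx, rfl⟩
          have hxC0 : x ∈ (Sum.inl ⁻¹' D iγ) ∪ {b} := hC'S.trans hS.subset hx
          have hxb : x ≠ b := fun h => hbC' (h ▸ hx)
          rcases hxC0 with h | h
          · exact h
          · exact absurd h hxb
        · rintro ⟨x, hx, hxy⟩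
          simp at hxy
  have hC0_circ : IsCircuit M ((Sum.inl ⁻¹' D iγ) ∪ {b}) := ⟨hdep_C0, hC0_min⟩
  -- the other circuits
  have hEj : ∀ j : Fin n, j ≠ iz → j ≠ iγ →
      IsCircuit M (Sum.inl ⁻¹' D j) ∧ a ∉ Sum.inl ⁻¹' D j ∧ b ∉ Sum.inl ⁻¹' D j := by
    intro j hjz hjγ
    have haj : Sum.inl a ∉ D j := fun h => hjz (huniq _ _ _ h ha)
    have hbj : Sum.inl b ∉ D j := fun h => hjz (huniq _ _ _ h hb)
    have hzj : Sum.inr 0 ∉ D j := fun h => hjz (huniq _ _ _ h hiz)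
    have hγj : Sum.inr 1 ∉ D j := fun h => hjγ (huniq _ _ _ h hiγ)
    have hsuppj : ∀ x, x ∈ Sum.inl ⁻¹' D j ↔ c j (Sum.inl x) ≠ 0 :=
      fun x => hcsupp j (Sum.inl x)
    have hadepj : (∑ x, (fun x => c j (Sum.inl x)) x • Aᵀ x) = 0 := by
      rw [adep_iff]
      intro i
      have hthis := htop j i
      rw [hzero _ _ hγj] at hthis
      simpa using hthis
    obtain ⟨w, hw⟩ := circuit_nonempty (hDc j)
    obtain ⟨x0, hx0⟩ : ∃ x, x ∈ Sum.inl ⁻¹' D j := by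
      rcases w with x | k
      · exact ⟨x, hw⟩
      · fin_cases k
        · exact absurd hw hzj
        · exact absurd hw hγj
    have hdepj : M.Dep (Sum.inl ⁻¹' D j) := dep_of_dependence hM
      (fun x hx => (hsuppj x).2 hx) ⟨x0, (hsuppj x0).1 hx0⟩ hadepj
    refine ⟨⟨hdepj, ?_⟩, haj, hbj⟩
    intro S hS
    by_contra hSnind
    obtain ⟨C', hC'S, hC'⟩ := exists_circuit_subset
      (Matroid.dep_iff.2 ⟨hSnind, hM.1 ▸ Set.subset_univ S⟩)
    obtain ⟨d, hdsupp, hdsum⟩ := circuit_dependence hM hC'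
    obtain ⟨y, hyC, hyS⟩ := Set.exists_of_ssubset hS
    have hyC' : y ∉ C' := fun h => hyS (hC'S h)
    have htopd := (adep_iff A d).1 hdsum
    have hda : d a = 0 := by
      by_contra h'
      exact haj (hC'S.trans hS.subset ((hdsupp a).2 h'))
    have hdb : d b = 0 := by
      by_contra h'
      exact hbj (hC'S.trans hS.subset ((hdsupp b).2 h'))
    obtain ⟨x1, hx1⟩ := circuit_nonempty hC'
    refine hcontr j (Sum.inl '' C') (Sum.elim d ![0, 0]) ?_ ?_ ?_ ?_
    · rintro (x | k) hx
      · exact ⟨x, (hdsupp x).2 (by simpa using hx), rfl⟩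
      · fin_cases k <;> simp at hx
    · exact ⟨Sum.inl x1, by simpa using (hdsupp x1).1 hx1⟩
    · rw [esdep_iff hab hα]
      exact ⟨fun i => by simpa using htopd i, by simp [hda, hdb]⟩
    · refine hss_of ?_ ⟨Sum.inl y, hyC, ?_⟩
      · rintro jj ⟨x, hx, rfl⟩
        exact hC'S.trans hS.subset hx
      · rintro ⟨x, hx, hxy⟩
        exact hyC' ((Sum.inl.inj hxy) ▸ hx)
  -- assembly
  have h2n : 2 ≤ n := by
    rcases n with _ | _ | n
    · exact iz.elim0
    · refine absurd (Fin.ext ?_) hne_zγ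
      have h1 := iz.isLt
      have h2 := iγ.isLt
      omega
    · omega
  obtain ⟨k, rfl⟩ : ∃ k, n = k + 2 := ⟨n - 2, by omega⟩
  obtain ⟨j0, hj0⟩ := Fin.exists_succAbove_eq (Ne.symm hne_zγ)
  have hr_inj : Function.Injective (fun i => iz.succAbove (Equiv.swap 0 j0 i)) :=
    fun i1 i2 h => (Equiv.swap 0 j0).injective (Fin.succAbove_right_injective h)
  have hr_ne : ∀ i : Fin (k + 1), iz.succAbove (Equiv.swap 0 j0 i) ≠ iz :=
    fun i => Fin.succAbove_ne iz _
  have hr0 : iz.succAbove (Equiv.swap 0 j0 0) = iγ := by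
    rw [Equiv.swap_apply_left]
    exact hj0
  have hriγ : ∀ i : Fin (k + 1), iz.succAbove (Equiv.swap 0 j0 i) = iγ ↔ i = 0 := by
    intro i
    constructor
    · intro h
      have h2 : Equiv.swap 0 j0 i = j0 := Fin.succAbove_right_injective (h.trans hj0.symm)
      have h3 := congrArg (Equiv.swap 0 j0) h2
      rwa [Equiv.swap_apply_self, Equiv.swap_apply_right] at h3
    · rintro rfl
      exact hr0
  have hr_surj : ∀ j : Fin (k + 2), j ≠ iz → ∃ i, iz.succAbove (Equiv.swap 0 j0 i) = j := by
    intro j hj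
    obtain ⟨i', hi'⟩ := Fin.exists_succAbove_eq hj
    exact ⟨Equiv.swap 0 j0 i', by rw [Equiv.swap_apply_self]; exact hi'⟩
  have hd0 : ∀ j : Fin (k + 2), j ≠ iz → j ≠ iγ →
      Disjoint ((Sum.inl ⁻¹' D iγ) ∪ {b}) (Sum.inl ⁻¹' D j) := by
    intro j hjz hjγ
    apply Set.disjoint_union_left.2
    constructor
    · exact (hDdisj iγ j (fun h => hjγ h.symm)).preimage _
    · rw [Set.disjoint_singleton_left]
      intro h
      exact hjz (huniq _ _ _ h hb)
  refine ⟨k, Sum.inl ⁻¹' D iz,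
    fun i => if iz.succAbove (Equiv.swap 0 j0 i) = iγ then (Sum.inl ⁻¹' D iγ) ∪ {b}
      else Sum.inl ⁻¹' D (iz.succAbove (Equiv.swap 0 j0 i)),
    ⟨hCnp_circ, ⟨a, haC, Or.inl rfl⟩, hCnp_np⟩, haC, hbC, ?_, ?_, ?_, ?_, ?_⟩
  · intro i
    beta_reduce
    by_cases h : iz.succAbove (Equiv.swap 0 j0 i) = iγ
    · rw [if_pos h]
      exact hC0_circ
    · rw [if_neg h]
      exact (hEj _ (hr_ne i) h).1
  · refine (Set.eq_univ_of_forall ?_).symm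
    intro x
    obtain ⟨j, hj⟩ := hmem (Sum.inl x)
    by_cases hjz : j = iz
    · exact Or.inl (by rw [← hjz]; exact hj)
    · obtain ⟨i, hi⟩ := hr_surj j hjz
      refine Or.inr (Set.mem_iUnion.2 ⟨i, ?_⟩)
      beta_reduce
      by_cases hiγ' : iz.succAbove (Equiv.swap 0 j0 i) = iγ
      · rw [if_pos hiγ']
        refine Or.inl ?_
        rw [← hiγ', hi]
        exact hj
      · rw [if_neg hiγ', hi]
        exact hj
  · intro i j hij
    beta_reduce
    have hrij : iz.succAbove (Equiv.swap 0 j0 i) ≠ iz.succAbove (Equiv.swap 0 j0 j) :=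
      fun h => hij (hr_inj h)
    by_cases hi' : iz.succAbove (Equiv.swap 0 j0 i) = iγ <;>
      by_cases hj' : iz.succAbove (Equiv.swap 0 j0 j) = iγ
    · exact absurd (hi'.trans hj'.symm) hrij
    · rw [if_pos hi', if_neg hj']
      exact hd0 _ (hr_ne j) hj'
    · rw [if_neg hi', if_pos hj']
      exact (hd0 _ (hr_ne i) hi').symm
    · rw [if_neg hi', if_neg hj']
      exact (hDdisj _ _ hrij).preimage _
  · intro i hi0
    beta_reduce
    have hiγ' : iz.succAbove (Equiv.swap 0 j0 i) ≠ iγ := fun h => hi0 ((hriγ i).1 h)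
    rw [if_neg hiγ']
    exact (hDdisj iz _ (Ne.symm (hr_ne i))).preimage _
  · beta_reduce
    rw [if_pos hr0, Set.inter_union_distrib_left]
    have h1 : (Sum.inl ⁻¹' D iz) ∩ (Sum.inl ⁻¹' D iγ) = ∅ :=
      Set.disjoint_iff_inter_eq_empty.1 ((hDdisj iz iγ hne_zγ).preimage _)
    rw [h1, Set.empty_union,
      Set.inter_eq_self_of_subset_right (Set.singleton_subset_iff.2 hbC)]
end
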